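/- For every rational number a, the set of triples (x, y, z) of rational numbers satisfying xyz(x + y + z) = a is infinite. -/

import Mathlib

open Polynomial

theorem stmt_12 (a : ℚ) :
    {p : ℚ × ℚ × ℚ | p.1 * p.2.1 * p.2.2 * (p.1 + p.2.1 + p.2.2) = a}.Infinite := by
  by_cases ha : a = 0
  · subst ha
    apply Set.infinite_of_injective_forall_mem (f := fun t : ℚ => (t, 0, 0))
    · intro s t h
      simpa using congrArg Prod.fst h
    · intro t; simp
  · set T := {p : ℚ × ℚ × ℚ | p.1 * p.2.1 * p.2.2 * (p.1 + p.2.1 + p.2.2) = a} with hT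
    set S : Set ℚ :=
      {s | s ≠ 0 ∧ s ^ 4 - 4 * a ≠ 0 ∧ s ^ 4 + 12 * a ≠ 0 ∧ 3 * s ^ 4 + 4 * a ≠ 0} with hSdef
    have hSc : Sᶜ.Finite := by
      have h1 : (X : ℚ[X]) ≠ 0 := X_ne_zero
      have h2 : (X ^ 4 - C (4 * a) : ℚ[X]) ≠ 0 := by
        intro h
        have := congrArg (fun p => Polynomial.coeff p 4) h
        simp [coeff_X_pow] at this
      have h3 : (X ^ 4 + C (12 * a) : ℚ[X]) ≠ 0 := by
        intro h
        have := congrArg (fun p => Polynomial.coeff p 4) h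
        simp [coeff_X_pow] at this
      have h4 : (C 3 * X ^ 4 + C (4 * a) : ℚ[X]) ≠ 0 := by
        intro h
        have := congrArg (fun p => Polynomial.coeff p 4) h
        simp [coeff_X_pow] at this
      have hP : (X * (X ^ 4 - C (4 * a)) * (X ^ 4 + C (12 * a)) * (C 3 * X ^ 4 + C (4 * a))
          : ℚ[X]) ≠ 0 := mul_ne_zero (mul_ne_zero (mul_ne_zero h1 h2) h3) h4
      refine (Polynomial.finite_setOf_isRoot hP).subset ?_
      intro s hs
      simp only [hSdef, Set.mem_compl_iff, Set.mem_setOf_eq, not_and_or, not_not] at hs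
      simp only [Set.mem_setOf_eq, IsRoot.def, eval_mul, eval_add, eval_sub, eval_pow,
        eval_X, eval_C]
      rcases hs with h | h | h | h <;> rw [h] <;> ring
    have hSinf : S.Infinite := by
      have := hSc.infinite_compl
      rwa [compl_compl] at this
    set xf : ℚ → ℚ := fun s => (s ^ 4 - 4 * a) ^ 2 / (2 * s ^ 3 * (s ^ 4 + 12 * a)) with hxf
    set yf : ℚ → ℚ :=
      fun s => 2 * a * (3 * s ^ 4 + 4 * a) ^ 2 / (s ^ 3 * (s ^ 4 - 4 * a) * (s ^ 4 + 12 * a))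
      with hyf
    set zf : ℚ → ℚ := fun s => s * (s ^ 4 + 12 * a) / (2 * (3 * s ^ 4 + 4 * a)) with hzf
    have hmem : ∀ s ∈ S, (xf s, yf s, zf s) ∈ T := by
      rintro s ⟨hs0, hd1, hd2, hd3⟩
      have hs3 : s ^ 3 ≠ 0 := pow_ne_zero _ hs0
      simp only [hT, Set.mem_setOf_eq, hxf, hyf, hzf]
      have hd3' : s ^ 4 * 3 + 4 * a ≠ 0 := by contrapose! hd3; linear_combination hd3
      have hd3'' : s ^ 4 * 3 + a * 4 ≠ 0 := by contrapose! hd3; linear_combination hd3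
      have hd2' : s ^ 4 + a * 12 ≠ 0 := by contrapose! hd2; linear_combination hd2
      field_simp
      ring
    by_contra hcon
    rw [Set.not_infinite] at hcon
    have himg : ((fun p : ℚ × ℚ × ℚ => p.2.2) '' T).Finite := hcon.image _
    have hsub : S ⊆ ⋃ c ∈ (fun p : ℚ × ℚ × ℚ => p.2.2) '' T,
        {s : ℚ | s ^ 5 + 12 * a * s - 6 * c * s ^ 4 - 8 * a * c = 0} := by
      intro s hs
      obtain ⟨hs0, hd1, hd2, hd3⟩ := hs
      have hmem' := hmem s ⟨hs0, hd1, hd2, hd3⟩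
      refine Set.mem_biUnion ⟨(xf s, yf s, zf s), hmem', rfl⟩ ?_
      simp only [Set.mem_setOf_eq, hzf]
      have hd3' : s ^ 4 * 3 + 4 * a ≠ 0 := by contrapose! hd3; linear_combination hd3
      have hd3'' : s ^ 4 * 3 + a * 4 ≠ 0 := by contrapose! hd3; linear_combination hd3
      field_simp
      ring
    have hfin : S.Finite := by
      refine (himg.biUnion fun c _ => ?_).subset hsub
      have hq : (X ^ 5 + C (12 * a) * X - C (6 * c) * X ^ 4 - C (8 * a * c) : ℚ[X]) ≠ 0 := by
        intro h
        have := congrArg (fun p => Polynomial.coeff p 5) h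
        simp [coeff_X_pow, coeff_C_mul, mul_assoc] at this
      refine (Polynomial.finite_setOf_isRoot hq).subset ?_
      intro s hs
      simp only [Set.mem_setOf_eq] at hs
      simp only [Set.mem_setOf_eq, IsRoot.def, eval_add, eval_sub, eval_mul, eval_pow,
        eval_X, eval_C]
      linear_combination hs
    exact hSinf hfin
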